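/- Let G be a transitive permutation group on a finite set Ω and G⁺ the subgroup generated by all point stabilizers. Then the exponent of G divides |G : Z(G)| · |Ω/G⁺|. -/

import Mathlib

/-- For a transitive permutation group `G` on a finite set `Ω` with `G⁺` the subgroup
generated by all point stabilizers, `exp(G)` divides `|G : Z(G)| · |Ω/G⁺|`. -/
theorem exponent_dvd_index_center_mul_orbits
    (G Ω : Type*) [Group G] [Finite Ω] [MulAction G Ω] [FaithfulSMul G Ω]
    [MulAction.IsPretransitive G Ω] :
    Monoid.exponent G ∣
      (Subgroup.center G).index *
        Nat.card (MulAction.orbitRel.Quotient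
          (⨆ δ : Ω, MulAction.stabilizer G δ : Subgroup G) Ω) := by
  classical
  rcases isEmpty_or_nonempty Ω with hΩ | ⟨⟨ω₀⟩⟩
  · haveI : Subsingleton G :=
      ⟨fun a b => FaithfulSMul.eq_of_smul_eq_smul (fun ω : Ω => (hΩ.false ω).elim)⟩
    exact Monoid.exponent_dvd_of_forall_pow_eq_one fun g => Subsingleton.elim _ _
  haveI : Finite G := Finite.of_injective _ (MulAction.toPerm_injective (α := G) (β := Ω))
  haveI : (Subgroup.center G).FiniteIndex := Subgroup.finiteIndex_of_finite
  set t : ℕ := (Subgroup.center G).index with ht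
  set H : Subgroup G := ⨆ δ : Ω, MulAction.stabilizer G δ with hH
  -- H is normal
  haveI hnorm : H.Normal := by
    constructor
    intro n hn g
    have h1 : g * n * g⁻¹ ∈ H.map (MulAut.conj g).toMonoidHom :=
      ⟨n, hn, by simp [MulAut.conj_apply]⟩
    have h2 : H.map (MulAut.conj g).toMonoidHom ≤ H := by
      rw [hH, Subgroup.map_iSup]
      refine iSup_le fun δ => ?_
      rw [← MulAction.stabilizer_smul_eq_stabilizer_map_conj]
      exact le_iSup (fun δ : Ω => MulAction.stabilizer G δ) (g • δ)
    exact h2 h1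
  -- elements of H have order dividing t = |G : Z(G)|
  have tpow : ∀ h ∈ H, h ^ t = 1 := by
    have hker : H ≤ (MonoidHom.transferCenterPow G).ker := by
      rw [hH]
      refine iSup_le fun δ h hh => ?_
      rw [MonoidHom.mem_ker]
      have hcent : h ^ t ∈ Subgroup.center G := by
        rw [ht, ← MonoidHom.transferCenterPow_apply (G := G)]
        exact (MonoidHom.transferCenterPow G h).2
      ext
      rw [MonoidHom.transferCenterPow_apply, Subgroup.coe_one, ← ht]
      refine FaithfulSMul.eq_of_smul_eq_smul fun ω : Ω => ?_
      obtain ⟨g, hg⟩ := MulAction.exists_smul_eq G δ ω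
      have hfix : h ^ t • δ = δ := pow_mem hh t
      calc h ^ t • ω = h ^ t • g • δ := by rw [hg]
        _ = (h ^ t * g) • δ := by rw [mul_smul]
        _ = (g * h ^ t) • δ := by rw [(Subgroup.mem_center_iff.mp hcent) g]
        _ = g • h ^ t • δ := by rw [mul_smul]
        _ = g • δ := by rw [hfix]
        _ = (1 : G) • ω := by rw [hg, one_smul]
    intro h hh
    have := hker hh
    rw [MonoidHom.mem_ker] at this
    have := congrArg (Subtype.val) this
    rwa [MonoidHom.transferCenterPow_apply, Subgroup.coe_one, ← ht] at this
  -- the number of H-orbits equals the index of H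
  have stab_le : MulAction.stabilizer G ω₀ ≤ H := le_iSup (fun δ : Ω => MulAction.stabilizer G δ) ω₀
  have key : Nat.card (MulAction.orbitRel.Quotient H Ω) = H.index := by
    rw [Subgroup.index]
    refine (Nat.card_eq_of_bijective
      (fun q : G ⧸ H => Quotient.liftOn' q
        (fun g => (Quotient.mk'' (g • ω₀) : MulAction.orbitRel.Quotient H Ω)) ?_) ?_).symm
    · intro a b hab
      rw [QuotientGroup.leftRel_apply] at hab
      refine Quotient.sound' ?_
      rw [MulAction.orbitRel_apply]
      refine ⟨⟨a * b⁻¹, ?_⟩, ?_⟩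
      · have := hnorm.conj_mem _ (inv_mem hab) a
        simpa [mul_assoc] using this
      · show (a * b⁻¹) • b • ω₀ = a • ω₀
        rw [smul_smul, mul_assoc, inv_mul_cancel, mul_one]
    · constructor
      · -- injective
        intro qa qb
        induction qa using QuotientGroup.induction_on with | H a =>
        induction qb using QuotientGroup.induction_on with | H b =>
        intro hab
        have hab' : (Quotient.mk'' (a • ω₀) : MulAction.orbitRel.Quotient H Ω)
            = Quotient.mk'' (b • ω₀) := hab
        have hrel := Quotient.exact' hab'
        rw [MulAction.orbitRel_apply] at hrel
        obtain ⟨⟨h, hh⟩, hsm⟩ := hrel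
        have hsm' : (h * b) • ω₀ = a • ω₀ := by
          rw [mul_smul]; exact hsm
        have hst : a⁻¹ * (h * b) ∈ MulAction.stabilizer G ω₀ := by
          rw [MulAction.mem_stabilizer_iff, mul_smul, hsm', smul_smul, inv_mul_cancel, one_smul]
        have hconj : a⁻¹ * h⁻¹ * a ∈ H := by
          have := hnorm.conj_mem _ (inv_mem hh) a⁻¹
          simpa [mul_assoc] using this
        have : a⁻¹ * b ∈ H := by
          have := mul_mem hconj (stab_le hst)
          have heq : (a⁻¹ * h⁻¹ * a) * (a⁻¹ * (h * b)) = a⁻¹ * b := by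
            group
          rwa [heq] at this
        exact (QuotientGroup.eq (s := H)).mpr this
      · -- surjective
        intro x
        induction x using Quotient.inductionOn' with | h ω =>
        obtain ⟨g, hg⟩ := MulAction.exists_smul_eq G ω₀ ω
        exact ⟨QuotientGroup.mk g, by simp only [Quotient.liftOn'_mk'', hg]⟩
  -- finish
  refine Monoid.exponent_dvd_of_forall_pow_eq_one fun g => ?_
  rw [pow_mul']
  refine tpow _ ?_
  have := H.pow_index_mem g
  rwa [← key] at this
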